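/- There exist δ₀ > 0, a constant C > 0 and an integer N₀ such that for every δ with |δ| ≤ δ₀, every N ≥ N₀ and every unit eigenvector u of H(δ)H(δ)ᵀ corresponding to its largest eigenvalue: ‖u uᵀ − P₀⊥‖ ≤ C/N, where ‖·‖ is the spectral norm. In other words, in the discretization scheme ‖P₀⊥(δ) − P₀⊥‖ = O(N^{−1}) as N → ∞ for sufficiently small δ. -/

import Mathlib

open Filter Matrix

/-- Hankelization (diagonal averaging): the `j`-th value is the average of the
entries `Y i k` with `i + k = j`. -/
noncomputable def hankelize {L K : ℕ} (Y : Matrix (Fin L) (Fin K) ℝ) (j : ℕ) : ℝ :=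
  (∑ i : Fin L, ∑ k : Fin K, if (i : ℕ) + (k : ℕ) = j then Y i k else 0) /
  (∑ i : Fin L, ∑ k : Fin K, if (i : ℕ) + (k : ℕ) = j then (1 : ℝ) else 0)

/-- Squared Euclidean norm of a vector. -/
noncomputable def normSq {M : ℕ} (w : Fin M → ℝ) : ℝ := ∑ i, w i ^ 2

/-- `u` is a unit eigenvector of `A` corresponding to its largest eigenvalue. -/
def IsTopEigenvector {L : ℕ} (A : Matrix (Fin L) (Fin L) ℝ) (u : Fin L → ℝ) : Prop :=
  normSq u = 1 ∧ ∃ μ : ℝ, A.mulVec u = μ • u ∧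
    ∀ (ν : ℝ) (v : Fin L → ℝ), v ≠ 0 → A.mulVec v = ν • v → ν ≤ μ

/-- The discretized exponential signal `x_n = a^{nT/N}`. -/
noncomputable def xdisc (a T : ℝ) (N : ℕ) : ℕ → ℝ := fun n => a ^ ((n : ℝ) * T / (N : ℝ))

/-- The `L × K` Hankel matrix of the discretized signal. -/
noncomputable def Hd (a T : ℝ) (N L K : ℕ) : Matrix (Fin L) (Fin K) ℝ :=
  Matrix.of fun i k => xdisc a T N ((i : ℕ) + (k : ℕ))

/-- The `L × K` Hankel matrix of the harmonic noise `e_n = cos(ξ n + φ)`. -/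
noncomputable def Ed (ξ φ : ℝ) (L K : ℕ) : Matrix (Fin L) (Fin K) ℝ :=
  Matrix.of fun i k => Real.cos (ξ * (((i : ℕ) + (k : ℕ) : ℕ) : ℝ) + φ)

/-- The vector `W_M = (1, a^{T/N}, …, a^{(M-1)T/N})ᵀ`. -/
noncomputable def Wd (a T : ℝ) (N M : ℕ) : Fin M → ℝ := fun i => a ^ (((i : ℕ) : ℝ) * T / (N : ℝ))

/-- `B(δ) = δ(HEᵀ + EHᵀ) + δ²EEᵀ`. -/
noncomputable def Bmat (a T ξ φ δ : ℝ) (N L K : ℕ) : Matrix (Fin L) (Fin L) ℝ :=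
  δ • (Hd a T N L K * (Ed ξ φ L K)ᵀ + Ed ξ φ L K * (Hd a T N L K)ᵀ)
  + δ ^ 2 • (Ed ξ φ L K * (Ed ξ φ L K)ᵀ)

/-- The spectral (ℓ²-operator) norm of a matrix. -/
noncomputable def specNorm {m n : ℕ} (A : Matrix (Fin m) (Fin n) ℝ) : ℝ :=
  ‖(Matrix.toEuclideanLin A).toContinuousLinearMap‖

/-- The max-norm of a matrix: the maximum of the absolute values of its entries. -/
noncomputable def maxNorm {m n : ℕ} (A : Matrix (Fin m) (Fin n) ℝ) : ℝ :=
  ⨆ p : Fin m × Fin n, |A p.1 p.2|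




noncomputable def en {n : ℕ} (u : Fin n → ℝ) : ℝ := ‖(WithLp.equiv 2 (Fin n → ℝ)).symm u‖
def dotR {n : ℕ} (u v : Fin n → ℝ) : ℝ := ∑ i, u i * v i

noncomputable def specNorm' {m n : ℕ} (A : Matrix (Fin m) (Fin n) ℝ) : ℝ :=
  ‖(Matrix.toEuclideanLin A).toContinuousLinearMap‖

lemma en_nonneg {n : ℕ} (u : Fin n → ℝ) : 0 ≤ en u := norm_nonneg _
lemma en_add_le {n : ℕ} (u v : Fin n → ℝ) : en (u + v) ≤ en u + en v := norm_add_le _ _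
lemma en_smul {n : ℕ} (c : ℝ) (u : Fin n → ℝ) : en (c • u) = |c| * en u := by
  have h : (WithLp.equiv 2 (Fin n → ℝ)).symm (c • u)
      = c • (WithLp.equiv 2 (Fin n → ℝ)).symm u := rfl
  rw [en, h, norm_smul, en]; simp

lemma en_eq_sqrt {n : ℕ} (u : Fin n → ℝ) : en u = Real.sqrt (∑ i, u i ^ 2) := by
  rw [en, EuclideanSpace.norm_eq]
  congr 1
  exact Finset.sum_congr rfl fun i _ => by rw [Real.norm_eq_abs, sq_abs]; rfl

lemma en_sq {n : ℕ} (u : Fin n → ℝ) : en u ^ 2 = ∑ i, u i ^ 2 := by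
  rw [en_eq_sqrt, Real.sq_sqrt (by positivity)]

lemma dotR_self {n : ℕ} (u : Fin n → ℝ) : dotR u u = en u ^ 2 := by
  rw [en_sq]; exact Finset.sum_congr rfl fun i _ => (sq (u i)).symm

lemma dotR_comm {n : ℕ} (u v : Fin n → ℝ) : dotR u v = dotR v u :=
  Finset.sum_congr rfl fun i _ => mul_comm _ _

lemma dotR_add_left {n : ℕ} (x y z : Fin n → ℝ) : dotR (x + y) z = dotR x z + dotR y z := by
  rw [dotR, dotR, dotR, ← Finset.sum_add_distrib]
  exact Finset.sum_congr rfl fun i _ => by simp [add_mul]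

lemma dotR_smul_left {n : ℕ} (c : ℝ) (x y : Fin n → ℝ) : dotR (c • x) y = c * dotR x y := by
  rw [dotR, dotR, Finset.mul_sum]
  exact Finset.sum_congr rfl fun i _ => by simp [mul_assoc]

lemma dotR_smul_right {n : ℕ} (c : ℝ) (x y : Fin n → ℝ) : dotR x (c • y) = c * dotR x y := by
  rw [dotR_comm, dotR_smul_left, dotR_comm]

lemma dotR_sub_left {n : ℕ} (x y z : Fin n → ℝ) : dotR (x - y) z = dotR x z - dotR y z := by
  rw [dotR, dotR, dotR, ← Finset.sum_sub_distrib]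
  exact Finset.sum_congr rfl fun i _ => by simp [sub_mul]

lemma dotR_sub_right {n : ℕ} (x y z : Fin n → ℝ) : dotR x (y - z) = dotR x y - dotR x z := by
  rw [dotR_comm, dotR_sub_left, dotR_comm y x, dotR_comm z x]

lemma dotR_add_right {n : ℕ} (x y z : Fin n → ℝ) : dotR x (y + z) = dotR x y + dotR x z := by
  rw [dotR_comm, dotR_add_left, dotR_comm y x, dotR_comm z x]

lemma dotR_inner {n : ℕ} (u v : Fin n → ℝ) :
    (inner ℝ ((WithLp.equiv 2 (Fin n → ℝ)).symm u) ((WithLp.equiv 2 (Fin n → ℝ)).symm v) : ℝ)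
      = dotR u v := by
  rw [PiLp.inner_apply]; exact Finset.sum_congr rfl fun i _ => by simp [mul_comm]

lemma abs_dotR_le {n : ℕ} (u v : Fin n → ℝ) : |dotR u v| ≤ en u * en v := by
  rw [← dotR_inner]; exact abs_real_inner_le_norm _ _

lemma specNorm'_nonneg {m n : ℕ} (A : Matrix (Fin m) (Fin n) ℝ) : 0 ≤ specNorm' A :=
  norm_nonneg _

lemma en_mulVec_le {m n : ℕ} (A : Matrix (Fin m) (Fin n) ℝ) (x : Fin n → ℝ) :
    en (A.mulVec x) ≤ specNorm' A * en x := by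
  have := ((Matrix.toEuclideanLin A).toContinuousLinearMap).le_opNorm
    ((WithLp.equiv 2 (Fin n → ℝ)).symm x)
  simpa [en, specNorm', Matrix.toEuclideanLin_apply] using this

lemma specNorm'_le_bound {m n : ℕ} (A : Matrix (Fin m) (Fin n) ℝ) (b : ℝ) (hb : 0 ≤ b)
    (h : ∀ x : Fin n → ℝ, en (A.mulVec x) ≤ b * en x) : specNorm' A ≤ b := by
  apply ContinuousLinearMap.opNorm_le_bound _ hb
  intro x
  simpa [en, specNorm', Matrix.toEuclideanLin_apply] using h (WithLp.equiv 2 (Fin n → ℝ) x)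

lemma specNorm'_add_le {m n : ℕ} (A B : Matrix (Fin m) (Fin n) ℝ) :
    specNorm' (A + B) ≤ specNorm' A + specNorm' B := by
  apply specNorm'_le_bound _ _ (add_nonneg (specNorm'_nonneg _) (specNorm'_nonneg _))
  intro x
  rw [Matrix.add_mulVec, add_mul]
  exact (en_add_le _ _).trans (add_le_add (en_mulVec_le _ _) (en_mulVec_le _ _))

lemma specNorm'_smul_le {m n : ℕ} (c : ℝ) (A : Matrix (Fin m) (Fin n) ℝ) :
    specNorm' (c • A) ≤ |c| * specNorm' A := by
  apply specNorm'_le_bound _ _ (mul_nonneg (abs_nonneg _) (specNorm'_nonneg _))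
  intro x
  rw [Matrix.smul_mulVec, en_smul, mul_assoc]
  exact mul_le_mul_of_nonneg_left (en_mulVec_le _ _) (abs_nonneg c)

lemma specNorm'_mul_le {m n p : ℕ} (A : Matrix (Fin m) (Fin n) ℝ)
    (B : Matrix (Fin n) (Fin p) ℝ) : specNorm' (A * B) ≤ specNorm' A * specNorm' B := by
  apply specNorm'_le_bound _ _ (mul_nonneg (specNorm'_nonneg _) (specNorm'_nonneg _))
  intro x
  rw [← Matrix.mulVec_mulVec, mul_assoc]
  exact (en_mulVec_le _ _).trans
    (mul_le_mul_of_nonneg_left (en_mulVec_le _ _) (specNorm'_nonneg _))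

lemma vecMulVec_mulVec' {m n : ℕ} (u : Fin m → ℝ) (v x : Fin n → ℝ) :
    (Matrix.vecMulVec u v).mulVec x = (dotR v x) • u := by
  funext i
  simp [Matrix.vecMulVec, Matrix.mulVec, dotProduct, dotR, Finset.sum_mul, mul_assoc]
  exact Finset.sum_congr rfl (fun j _ => by ring)

lemma specNorm'_vecMulVec_le {m n : ℕ} (u : Fin m → ℝ) (v : Fin n → ℝ) :
    specNorm' (Matrix.vecMulVec u v) ≤ en u * en v := by
  apply specNorm'_le_bound _ _ (mul_nonneg (en_nonneg _) (en_nonneg _))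
  intro x
  rw [vecMulVec_mulVec', en_smul]
  calc |dotR v x| * en u ≤ (en v * en x) * en u :=
        mul_le_mul_of_nonneg_right (abs_dotR_le v x) (en_nonneg u)
    _ = en u * en v * en x := by ring

lemma specNorm'_le_frobenius {m n : ℕ} (A : Matrix (Fin m) (Fin n) ℝ) :
    specNorm' A ≤ Real.sqrt (∑ i, ∑ j, A i j ^ 2) := by
  apply specNorm'_le_bound _ _ (Real.sqrt_nonneg _)
  intro x
  rw [en_eq_sqrt, en_eq_sqrt, ← Real.sqrt_mul (by positivity)]
  apply Real.sqrt_le_sqrt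
  rw [Finset.sum_mul]
  apply Finset.sum_le_sum
  intro i _
  have h : A.mulVec x i = ∑ j, A i j * x j := rfl
  rw [h]
  exact Finset.sum_mul_sq_le_sq_mul_sq _ _ _

lemma en_le_of_abs_le {n : ℕ} (v : Fin n → ℝ) (c : ℝ) (hc : 0 ≤ c) (h : ∀ i, |v i| ≤ c) :
    en v ≤ Real.sqrt n * c := by
  rw [en_eq_sqrt, show Real.sqrt (n : ℝ) * c = Real.sqrt ((n : ℝ) * c ^ 2) by
    rw [Real.sqrt_mul (by positivity), Real.sqrt_sq hc]]
  apply Real.sqrt_le_sqrt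
  calc ∑ i, v i ^ 2 ≤ ∑ _i : Fin n, c ^ 2 :=
        Finset.sum_le_sum fun i _ => by
          have := h i
          nlinarith [abs_nonneg (v i), sq_abs (v i)]
    _ = (n : ℝ) * c ^ 2 := by simp [mul_comm]

lemma rayleigh_le_top {L : ℕ} (A : Matrix (Fin L) (Fin L) ℝ) (hA : A.IsHermitian) (μ : ℝ)
    (htop : ∀ (ν : ℝ) (v : Fin L → ℝ), v ≠ 0 → A.mulVec v = ν • v → ν ≤ μ)
    (w : Fin L → ℝ) :
    dotR (A.mulVec w) w ≤ μ * dotR w w := by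
  classical
  set b := hA.eigenvectorBasis with hb
  have hev : ∀ i, hA.eigenvalues i ≤ μ := by
    intro i
    refine htop _ (⇑(b i)) ?_ (hA.mulVec_eigenvectorBasis i)
    intro hzero
    apply b.orthonormal.ne_zero i
    have h2 : b i = (WithLp.equiv 2 (Fin L → ℝ)).symm 0 := by
      rw [← hzero]; exact ((WithLp.equiv 2 _).symm_apply_apply _).symm
    rw [h2]; rfl
  set W : EuclideanSpace ℝ (Fin L) := (WithLp.equiv 2 (Fin L → ℝ)).symm w with hW
  set T := Matrix.toEuclideanLin A with hT
  have hsymT : LinearMap.IsSymmetric T := (Matrix.isHermitian_iff_isSymmetric).1 hA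
  have hTb : ∀ i, T (b i) = hA.eigenvalues i • b i := by
    intro i
    have h1 : T (b i) = (WithLp.equiv 2 (Fin L → ℝ)).symm (A.mulVec ⇑(b i)) := rfl
    rw [h1, hA.mulVec_eigenvectorBasis i]
    rfl
  have key : (inner ℝ (T W) W : ℝ) = ∑ i, hA.eigenvalues i * ((inner ℝ (b i) W : ℝ))^2 := by
    rw [← b.sum_inner_mul_inner (T W) W]
    refine Finset.sum_congr rfl fun i _ => ?_
    have h3 : (inner ℝ (T W) (b i) : ℝ) = inner ℝ W (T (b i)) := hsymT W (b i)
    rw [h3, hTb i, inner_smul_right, real_inner_comm W (b i)]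
    ring
  have hWW : (inner ℝ W W : ℝ) = ∑ i, ((inner ℝ (b i) W : ℝ))^2 := by
    rw [← b.sum_inner_mul_inner W W]
    refine Finset.sum_congr rfl fun i _ => ?_
    rw [real_inner_comm W (b i)]; ring
  have hle : (inner ℝ (T W) W : ℝ) ≤ μ * inner ℝ W W := by
    rw [key, hWW, Finset.mul_sum]
    exact Finset.sum_le_sum fun i _ => mul_le_mul_of_nonneg_right (hev i) (sq_nonneg _)
  have e1 : dotR (A.mulVec w) w = (inner ℝ (T W) W : ℝ) := by rw [← dotR_inner]; rfl
  have e2 : dotR w w = (inner ℝ W W : ℝ) := (dotR_inner w w).symm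
  rw [e1, e2]; exact hle

lemma osc_bound (ξ c r : ℝ) (hr : 1 ≤ r) (hs : 0 < Real.sin ξ) (M : ℕ) (R : ℝ)
    (hR : r ^ M ≤ R) :
    |∑ k ∈ Finset.range M, r ^ k * Real.cos (ξ * k + c)| ≤ (R + 1) / Real.sin ξ := by
  set z : ℂ := (r : ℂ) * Complex.exp (ξ * Complex.I) with hz
  have hzim : z.im = r * Real.sin ξ := by
    simp [hz, Complex.exp_ofReal_mul_I_re]
  have hz1 : z ≠ 1 := by
    intro h
    have h0 : z.im = 0 := by rw [h]; simp
    rw [hzim] at h0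
    nlinarith
  have hzabs : ‖z‖ = r := by
    rw [hz, norm_mul, Complex.norm_exp_ofReal_mul_I, Complex.norm_real,
      Real.norm_of_nonneg (by linarith : (0:ℝ) ≤ r), mul_one]
  have hre : ∀ k : ℕ, (Complex.exp (c * Complex.I) * z ^ k).re
      = r ^ k * Real.cos (ξ * k + c) := by
    intro k
    have h1 : Complex.exp ((c:ℂ) * Complex.I) * z ^ k
        = ((r^k : ℝ) : ℂ) * Complex.exp ((((ξ * k + c : ℝ)) : ℂ) * Complex.I) := by
      calc Complex.exp ((c:ℂ) * Complex.I) * z ^ k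
          = Complex.exp ((c:ℂ) * Complex.I) *
            ((r:ℂ)^k * Complex.exp ((k:ℂ) * ((ξ:ℂ) * Complex.I))) := by
            rw [hz, mul_pow, ← Complex.exp_nat_mul]
        _ = (r:ℂ)^k * (Complex.exp ((c:ℂ) * Complex.I) *
            Complex.exp ((k:ℂ) * ((ξ:ℂ) * Complex.I))) := by ring
        _ = (r:ℂ)^k * Complex.exp ((c:ℂ) * Complex.I + (k:ℂ) * ((ξ:ℂ) * Complex.I)) := by
            rw [← Complex.exp_add]
        _ = ((r^k : ℝ) : ℂ) * Complex.exp ((((ξ * k + c : ℝ)) : ℂ) * Complex.I) := by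
            rw [show ((c:ℂ) * Complex.I + (k:ℂ) * ((ξ:ℂ) * Complex.I))
                = (((ξ * k + c : ℝ)) : ℂ) * Complex.I by push_cast; ring,
              show ((r:ℂ)^k) = ((r^k : ℝ) : ℂ) by push_cast; ring]
    rw [h1, Complex.re_ofReal_mul, Complex.exp_ofReal_mul_I_re]
  have hsum : ∑ k ∈ Finset.range M, r ^ k * Real.cos (ξ * k + c)
      = (Complex.exp (c * Complex.I) * ∑ k ∈ Finset.range M, z ^ k).re := by
    rw [Finset.mul_sum, Complex.re_sum]
    exact Finset.sum_congr rfl fun k _ => (hre k).symm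
  rw [hsum]
  have hgeom : ∑ k ∈ Finset.range M, z ^ k = (z ^ M - 1) / (z - 1) := geom_sum_eq hz1 M
  have habs1 : Real.sin ξ ≤ ‖z - 1‖ := by
    have h1 : |(z - 1).im| ≤ ‖z - 1‖ := Complex.abs_im_le_norm _
    have h2 : (z - 1).im = r * Real.sin ξ := by simp [hzim]
    rw [h2] at h1
    calc Real.sin ξ ≤ r * Real.sin ξ := le_mul_of_one_le_left hs.le hr
      _ ≤ |r * Real.sin ξ| := le_abs_self _
      _ ≤ ‖z - 1‖ := h1
  calc |(Complex.exp (c * Complex.I) * ∑ k ∈ Finset.range M, z ^ k).re|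
      ≤ ‖Complex.exp (c * Complex.I) * ∑ k ∈ Finset.range M, z ^ k‖ :=
        Complex.abs_re_le_norm _
    _ = ‖∑ k ∈ Finset.range M, z ^ k‖ := by
        rw [norm_mul, Complex.norm_exp_ofReal_mul_I, one_mul]
    _ = ‖z ^ M - 1‖ / ‖z - 1‖ := by rw [hgeom, norm_div]
    _ ≤ (R + 1) / Real.sin ξ := by
        apply div_le_div₀ (by linarith [pow_nonneg (by linarith : (0:ℝ) ≤ r) M]) ?_ hs habs1
        calc ‖z ^ M - 1‖ ≤ ‖z ^ M‖ + 1 := by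
              have := norm_sub_le (z ^ M) 1
              simpa using this
          _ ≤ R + 1 := by rw [norm_pow, hzabs]; linarith

/-- Oscillation bound in rpow form. -/
lemma osc_row (a T ξ : ℝ) (ha : 1 < a) (hT : 0 < T) (hs : 0 < Real.sin ξ)
    (N M : ℕ) (hM : M ≤ N) (hN : 0 < N) (c : ℝ) :
    |∑ k ∈ Finset.range M, a ^ ((k : ℝ) * T / (N : ℝ)) * Real.cos (ξ * k + c)|
      ≤ (a ^ T + 1) / Real.sin ξ := by
  have ha0 : (0:ℝ) < a := by linarith
  have hN0 : (0:ℝ) < (N:ℝ) := by exact_mod_cast hN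
  set r : ℝ := a ^ (T / (N : ℝ)) with hr
  have hrpow : ∀ k : ℕ, a ^ ((k : ℝ) * T / (N : ℝ)) = r ^ k := by
    intro k
    rw [hr, ← Real.rpow_natCast (a ^ (T / (N:ℝ))) k, ← Real.rpow_mul ha0.le]
    congr 1
    field_simp
  have hr1 : 1 ≤ r := by
    rw [hr]
    calc (1:ℝ) = a ^ (0:ℝ) := (Real.rpow_zero a).symm
      _ ≤ a ^ (T / (N:ℝ)) := Real.rpow_le_rpow_of_exponent_le ha.le (by positivity)
  have hrM : r ^ M ≤ a ^ T := by
    rw [← hrpow M]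
    apply Real.rpow_le_rpow_of_exponent_le ha.le
    rw [div_le_iff₀ hN0]
    have : (M : ℝ) ≤ (N : ℝ) := by exact_mod_cast hM
    nlinarith
  have := osc_bound ξ c r hr1 hs M (a ^ T) hrM
  calc |∑ k ∈ Finset.range M, a ^ ((k : ℝ) * T / (N : ℝ)) * Real.cos (ξ * k + c)|
      = |∑ k ∈ Finset.range M, r ^ k * Real.cos (ξ * k + c)| := by
        congr 1
        exact Finset.sum_congr rfl fun k _ => by rw [hrpow k]
    _ ≤ (a ^ T + 1) / Real.sin ξ := this




section
variable {a T ξ φ : ℝ} {N L K : ℕ}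

lemma one_le_mul_self {x : ℝ} (h : 1 ≤ x) : 1 ≤ x * x := by
  have h0 : (0:ℝ) ≤ x := le_trans zero_le_one h
  calc (1:ℝ) = 1 * 1 := (one_mul 1).symm
    _ ≤ x * x := mul_le_mul h h zero_le_one h0

lemma Wd_one_le (ha : 1 < a) (hT : 0 < T) (i : Fin L) : 1 ≤ Wd a T N L i := by
  have ha0 : (0:ℝ) < a := by linarith
  calc (1:ℝ) = a ^ (0:ℝ) := (Real.rpow_zero a).symm
    _ ≤ Wd a T N L i := Real.rpow_le_rpow_of_exponent_le ha.le (by positivity)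

lemma Wd_le (ha : 1 < a) (hT : 0 < T) (hL : L ≤ N) (hN : 0 < N) (i : Fin L) :
    Wd a T N L i ≤ a ^ T := by
  apply Real.rpow_le_rpow_of_exponent_le ha.le
  have hi : (i : ℕ) < N := lt_of_lt_of_le i.2 hL
  have hiN : ((i:ℕ) : ℝ) ≤ (N : ℝ) := by exact_mod_cast hi.le
  have hN0 : (0:ℝ) < (N:ℝ) := by exact_mod_cast hN
  rw [div_le_iff₀ hN0]
  nlinarith

lemma Hd_eq_vecMulVec (ha : 1 < a) :
    Hd a T N L K = Matrix.vecMulVec (Wd a T N L) (Wd a T N K) := by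
  have ha0 : (0:ℝ) < a := by linarith
  ext i j
  show xdisc a T N ((i:ℕ) + (j:ℕ)) = Wd a T N L i * Wd a T N K j
  rw [xdisc, Wd, Wd, ← Real.rpow_add ha0]
  congr 1
  push_cast
  ring
end

section
variable {a T ξ φ : ℝ} {N L K : ℕ}

lemma Ed_mulVec_Wd_bound (ha : 1 < a) (hT : 0 < T) (hs : 0 < Real.sin ξ)
    (hK : K ≤ N) (hN : 0 < N) (i : Fin L) :
    |(Ed ξ φ L K).mulVec (Wd a T N K) i| ≤ (a ^ T + 1) / Real.sin ξ := by
  have h1 : (Ed ξ φ L K).mulVec (Wd a T N K) i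
      = ∑ k ∈ Finset.range K, a ^ ((k:ℝ) * T / (N:ℝ)) * Real.cos (ξ * k + (ξ * i + φ)) := by
    rw [show (Ed ξ φ L K).mulVec (Wd a T N K) i
        = ∑ k : Fin K, Real.cos (ξ * (((i:ℕ) + (k:ℕ) : ℕ) : ℝ) + φ)
          * a ^ (((k:ℕ):ℝ) * T / (N:ℝ)) from rfl]
    rw [Fin.sum_univ_eq_sum_range (fun k =>
      Real.cos (ξ * (((i:ℕ) + k : ℕ) : ℝ) + φ) * a ^ ((k:ℝ) * T / (N:ℝ))) K]
    refine Finset.sum_congr rfl fun k _ => ?_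
    rw [mul_comm]
    congr 1
    push_cast
    ring
  rw [h1]
  exact osc_row a T ξ ha hT hs N K hK hN (ξ * i + φ)

lemma Ed_transpose_mulVec_Wd_bound (ha : 1 < a) (hT : 0 < T) (hs : 0 < Real.sin ξ)
    (hL : L ≤ N) (hN : 0 < N) (k : Fin K) :
    |(Ed ξ φ L K)ᵀ.mulVec (Wd a T N L) k| ≤ (a ^ T + 1) / Real.sin ξ := by
  have h1 : (Ed ξ φ L K)ᵀ.mulVec (Wd a T N L) k
      = ∑ i ∈ Finset.range L, a ^ ((i:ℝ) * T / (N:ℝ)) * Real.cos (ξ * i + (ξ * k + φ)) := by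
    rw [show (Ed ξ φ L K)ᵀ.mulVec (Wd a T N L) k
        = ∑ i : Fin L, Real.cos (ξ * (((i:ℕ) + (k:ℕ) : ℕ) : ℝ) + φ)
          * a ^ (((i:ℕ):ℝ) * T / (N:ℝ)) from rfl]
    rw [Fin.sum_univ_eq_sum_range (fun i =>
      Real.cos (ξ * ((i + (k:ℕ) : ℕ) : ℝ) + φ) * a ^ ((i:ℝ) * T / (N:ℝ))) L]
    refine Finset.sum_congr rfl fun i _ => ?_
    rw [mul_comm]
    congr 1
    push_cast
    ring
  rw [h1]
  exact osc_row a T ξ ha hT hs N L hL hN (ξ * k + φ)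
end



set_option maxHeartbeats 2000000 in
/-- in the discretization scheme, `‖P₀⊥(δ) - P₀⊥‖ = O(1/N)` for
sufficiently small `δ`, where `P₀⊥(δ) = u uᵀ` for a top unit eigenvector `u`
of `H(δ)H(δ)ᵀ`. -/
theorem stmt_12 (a T ξ φ α : ℝ) (ha : 1 < a) (hT : 0 < T)
    (hξ : ξ ∈ Set.Ioo 0 Real.pi) (hφ : φ ∈ Set.Ico 0 (2 * Real.pi))
    (hα : α ∈ Set.Ioo (0 : ℝ) 1)
    (L K : ℕ → ℕ)
    (hLK : ∀ N, 3 ≤ N → 1 < L N ∧ 1 < K N ∧ L N + K N = N + 1)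
    (hlim : Tendsto (fun N : ℕ => (L N : ℝ) / (N : ℝ)) atTop (nhds α)) :
    ∃ δ₀ > (0 : ℝ), ∃ C > (0 : ℝ), ∃ N₀ : ℕ, ∀ δ : ℝ, |δ| ≤ δ₀ → ∀ N, N₀ ≤ N →
      ∀ u : Fin (L N) → ℝ,
        IsTopEigenvector
          ((Hd a T N (L N) (K N) + δ • Ed ξ φ (L N) (K N)) *
            (Hd a T N (L N) (K N) + δ • Ed ξ φ (L N) (K N))ᵀ) u →
        specNorm (Matrix.vecMulVec u u -
            (normSq (Wd a T N (L N)))⁻¹ •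
              Matrix.vecMulVec (Wd a T N (L N)) (Wd a T N (L N))) ≤
          C / (N : ℝ) := by
  classical
  obtain ⟨hξ0, hξπ⟩ := hξ
  obtain ⟨hα0, hα1⟩ := hα
  have hsin : 0 < Real.sin ξ := Real.sin_pos_of_pos_of_lt_pi hξ0 hξπ
  have ha0 : (0:ℝ) < a := by linarith
  set R : ℝ := a ^ T with hRdef
  have hR1 : 1 ≤ R := by
    rw [hRdef]
    calc (1:ℝ) = a ^ (0:ℝ) := (Real.rpow_zero a).symm
      _ ≤ a ^ T := Real.rpow_le_rpow_of_exponent_le ha.le hT.le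
  have hRpos : 0 < R := by linarith
  set C₀ : ℝ := (R + 1) / Real.sin ξ with hC₀def
  have hC₀pos : 0 < C₀ := div_pos (by linarith) hsin
  set β : ℝ := α / 2 with hβdef
  set γ : ℝ := (1 - α) / 2 with hγdef
  have hβpos : 0 < β := by rw [hβdef]; linarith
  have hγpos : 0 < γ := by rw [hγdef]; linarith
  set C₂ : ℝ := 2 * R ^ 2 + 1 with hC₂def
  have hC₂pos : 0 < C₂ := by positivity
  set C₃ : ℝ := C₀ * R + C₀ / Real.sqrt β with hC₃def
  have hC₃pos : 0 < C₃ := by positivity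
  set δ₀ : ℝ := min 1 (β * γ / (4 * C₂)) with hδ₀def
  have hδ₀pos : 0 < δ₀ := lt_min one_pos (by positivity)
  set C₄ : ℝ := 2 * C₃ / (β * γ) with hC₄def
  have hC₄pos : 0 < C₄ := by positivity
  obtain ⟨N₁, hN₁⟩ := Metric.tendsto_atTop.1 hlim (min β γ) (lt_min hβpos hγpos)
  refine ⟨δ₀, hδ₀pos, 4 * C₄ + 1, by positivity, max N₁ 3, ?_⟩
  intro δ hδ N hN u hu
  have hN3 : 3 ≤ N := le_trans (le_max_right _ _) hN
  obtain ⟨hL1, hK1, hLKsum⟩ := hLK N hN3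
  have hNpos : 0 < N := by omega
  have hN0 : (0:ℝ) < (N:ℝ) := by exact_mod_cast hNpos
  have hdist := hN₁ N (le_trans (le_max_left _ _) hN)
  rw [Real.dist_eq] at hdist
  have hLleN : L N ≤ N := by omega
  have hKleN : K N ≤ N := by omega
  have hLge : β * (N:ℝ) ≤ (L N : ℝ) := by
    have h1 : |(L N:ℝ)/(N:ℝ) - α| < β := lt_of_lt_of_le hdist (min_le_left _ _)
    have h2 : α - β < (L N:ℝ)/(N:ℝ) := by
      have := abs_lt.1 h1
      linarith [this.1]
    have h3 : β ≤ (L N:ℝ)/(N:ℝ) := by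
      rw [hβdef] at h2 ⊢
      linarith
    calc β * (N:ℝ) ≤ ((L N:ℝ)/(N:ℝ)) * (N:ℝ) := mul_le_mul_of_nonneg_right h3 hN0.le
      _ = (L N : ℝ) := by field_simp
  have hKge : γ * (N:ℝ) ≤ (K N : ℝ) := by
    have h1 : |(L N:ℝ)/(N:ℝ) - α| < γ := lt_of_lt_of_le hdist (min_le_right _ _)
    have h2 : (L N:ℝ)/(N:ℝ) < α + γ := by
      have := abs_lt.1 h1
      linarith [this.2]
    have h3 : (L N : ℝ) < (α + γ) * (N : ℝ) := by
      rw [div_lt_iff₀ hN0] at h2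
      linarith
    have h4 : (K N : ℝ) = (N:ℝ) + 1 - (L N : ℝ) := by
      have : (L N : ℝ) + (K N : ℝ) = (N:ℝ) + 1 := by exact_mod_cast hLKsum
      linarith
    rw [h4, hγdef]
    rw [hγdef] at h3
    linarith
  -- abbreviations
  set W : Fin (L N) → ℝ := Wd a T N (L N) with hWdef
  set W' : Fin (K N) → ℝ := Wd a T N (K N) with hW'def
  set H : Matrix (Fin (L N)) (Fin (K N)) ℝ := Hd a T N (L N) (K N) with hHdef
  set E : Matrix (Fin (L N)) (Fin (K N)) ℝ := Ed ξ φ (L N) (K N) with hEdef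
  have hH : H = Matrix.vecMulVec W W' := Hd_eq_vecMulVec ha
  have hHt : Hᵀ = Matrix.vecMulVec W' W := by
    rw [hH]; ext i j; simp [Matrix.vecMulVec, Matrix.transpose_apply, mul_comm]
  have hsqrtNN : Real.sqrt (N:ℝ) * Real.sqrt (N:ℝ) = (N:ℝ) := Real.mul_self_sqrt hN0.le
  -- basic норм bounds
  have hWle : en W ≤ Real.sqrt (N:ℝ) * R := by
    have h := en_le_of_abs_le W R hRpos.le (fun i => by
      rw [abs_of_nonneg (by linarith [Wd_one_le (N := N) ha hT i] : (0:ℝ) ≤ W i)]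
      exact Wd_le ha hT hLleN hNpos i)
    calc en W ≤ Real.sqrt (L N : ℝ) * R := h
      _ ≤ Real.sqrt (N:ℝ) * R := by
        apply mul_le_mul_of_nonneg_right _ hRpos.le
        exact Real.sqrt_le_sqrt (by exact_mod_cast hLleN)
  have hW'le : en W' ≤ Real.sqrt (N:ℝ) * R := by
    have h := en_le_of_abs_le W' R hRpos.le (fun i => by
      rw [abs_of_nonneg (by linarith [Wd_one_le (N := N) ha hT i] : (0:ℝ) ≤ W' i)]
      exact Wd_le ha hT hKleN hNpos i)
    calc en W' ≤ Real.sqrt (K N : ℝ) * R := h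
      _ ≤ Real.sqrt (N:ℝ) * R := by
        apply mul_le_mul_of_nonneg_right _ hRpos.le
        exact Real.sqrt_le_sqrt (by exact_mod_cast hKleN)
  have hdWW : (L N : ℝ) ≤ dotR W W := by
    rw [dotR]
    calc (L N : ℝ) = ∑ _i : Fin (L N), (1:ℝ) := by simp
      _ ≤ ∑ i, W i * W i := Finset.sum_le_sum fun i _ =>
          one_le_mul_self (Wd_one_le (N := N) ha hT i)
  have hdW'W' : (K N : ℝ) ≤ dotR W' W' := by
    rw [dotR]
    calc (K N : ℝ) = ∑ _i : Fin (K N), (1:ℝ) := by simp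
      _ ≤ ∑ i, W' i * W' i := Finset.sum_le_sum fun i _ =>
          one_le_mul_self (Wd_one_le (N := N) ha hT i)
  set s : ℝ := en W with hsdef
  have hs2 : s ^ 2 = dotR W W := (dotR_self W).symm
  have hsL : (L N : ℝ) ≤ s ^ 2 := by rw [hs2]; exact hdWW
  have hLpos : (0:ℝ) < (L N : ℝ) := by exact_mod_cast Nat.lt_of_lt_of_le Nat.zero_lt_one hL1.le
  have hs0' : 0 < s ^ 2 := lt_of_lt_of_le hLpos hsL
  have hspos : 0 < s := by
    rcases (en_nonneg W).lt_or_eq with h | h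
    · exact h
    · exfalso
      rw [hsdef, ← h] at hs0'
      simp at hs0'
  have hsne : s ≠ 0 := ne_of_gt hspos
  have hsles : s ≤ Real.sqrt (N:ℝ) * R := hWle
  have hsgeL : Real.sqrt (β * (N:ℝ)) ≤ s := by
    rw [show s = Real.sqrt (s^2) from (Real.sqrt_sq hspos.le).symm]
    apply Real.sqrt_le_sqrt
    calc β * (N:ℝ) ≤ (L N : ℝ) := hLge
      _ ≤ s ^ 2 := hsL
  set q : ℝ := dotR W' W' with hqdef
  have hqK : (K N : ℝ) ≤ q := hdW'W'
  have hqpos : 0 < q := by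
    have : (0:ℝ) < (K N : ℝ) := by exact_mod_cast Nat.lt_of_lt_of_le Nat.zero_lt_one hK1.le
    linarith
  set w : Fin (L N) → ℝ := s⁻¹ • W with hwdef
  have hWsw : W = s • w := by
    rw [hwdef, smul_smul, mul_inv_cancel₀ hsne, one_smul]
  have hww : dotR w w = 1 := by
    rw [hwdef, dotR_smul_left, dotR_smul_right, ← hs2]
    field_simp
  have henw : en w = 1 := by
    have h1 : en w ^ 2 = 1 := by rw [← dotR_self, hww]
    calc en w = Real.sqrt (en w ^ 2) := (Real.sqrt_sq (en_nonneg w)).symm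
      _ = 1 := by rw [h1, Real.sqrt_one]
  -- noise bounds
  have hEW' : en (E.mulVec W') ≤ Real.sqrt (N:ℝ) * C₀ := by
    have h := en_le_of_abs_le (E.mulVec W') C₀ hC₀pos.le (fun i => by
      rw [hEdef, hW'def, hC₀def, hRdef]
      exact Ed_mulVec_Wd_bound ha hT hsin hKleN hNpos i)
    calc en (E.mulVec W') ≤ Real.sqrt (L N : ℝ) * C₀ := h
      _ ≤ Real.sqrt (N:ℝ) * C₀ := by
        apply mul_le_mul_of_nonneg_right _ hC₀pos.le
        exact Real.sqrt_le_sqrt (by exact_mod_cast hLleN)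
  have hEtW : en (Eᵀ.mulVec W) ≤ Real.sqrt (N:ℝ) * C₀ := by
    have h := en_le_of_abs_le (Eᵀ.mulVec W) C₀ hC₀pos.le (fun i => by
      rw [hEdef, hWdef, hC₀def, hRdef]
      exact Ed_transpose_mulVec_Wd_bound ha hT hsin hLleN hNpos i)
    calc en (Eᵀ.mulVec W) ≤ Real.sqrt (K N : ℝ) * C₀ := h
      _ ≤ Real.sqrt (N:ℝ) * C₀ := by
        apply mul_le_mul_of_nonneg_right _ hC₀pos.le
        exact Real.sqrt_le_sqrt (by exact_mod_cast hKleN)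
  have hEsq : ∀ (i : Fin (L N)) (j : Fin (K N)), E i j ^ 2 ≤ 1 := by
    intro i j
    rw [hEdef]
    exact Real.cos_sq_le_one _
  have hLKN2 : (L N : ℝ) * (K N : ℝ) ≤ (N:ℝ)^2 := by
    have h1 : (L N:ℝ) ≤ (N:ℝ) := by exact_mod_cast hLleN
    have h2 : (K N:ℝ) ≤ (N:ℝ) := by exact_mod_cast hKleN
    have h3 : (0:ℝ) ≤ (K N : ℝ) := by positivity
    calc (L N : ℝ) * (K N : ℝ) ≤ (N:ℝ) * (N:ℝ) := mul_le_mul h1 h2 h3 hN0.le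
      _ = (N:ℝ)^2 := (sq (N:ℝ)).symm
  have hEfro : specNorm' E ≤ (N:ℝ) := by
    calc specNorm' E ≤ Real.sqrt (∑ i, ∑ j, E i j ^ 2) := specNorm'_le_frobenius E
      _ ≤ Real.sqrt ((N:ℝ)^2) := by
          apply Real.sqrt_le_sqrt
          calc ∑ i, ∑ j, E i j ^ 2 ≤ ∑ _i : Fin (L N), ∑ _j : Fin (K N), (1:ℝ) := by
                apply Finset.sum_le_sum; intro i _
                apply Finset.sum_le_sum; intro j _
                exact hEsq i j
            _ = (L N : ℝ) * (K N : ℝ) := by simp [mul_comm]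
            _ ≤ (N:ℝ)^2 := hLKN2
      _ = (N:ℝ) := Real.sqrt_sq hN0.le
  have hEtfro : specNorm' Eᵀ ≤ (N:ℝ) := by
    calc specNorm' Eᵀ ≤ Real.sqrt (∑ i, ∑ j, Eᵀ i j ^ 2) := specNorm'_le_frobenius Eᵀ
      _ ≤ Real.sqrt ((N:ℝ)^2) := by
          apply Real.sqrt_le_sqrt
          calc ∑ i, ∑ j, Eᵀ i j ^ 2 ≤ ∑ _i : Fin (K N), ∑ _j : Fin (L N), (1:ℝ) := by
                apply Finset.sum_le_sum; intro i _
                apply Finset.sum_le_sum; intro j _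
                exact hEsq j i
            _ = (K N : ℝ) * (L N : ℝ) := by simp [mul_comm]
            _ ≤ (N:ℝ)^2 := by rw [mul_comm]; exact hLKN2
      _ = (N:ℝ) := Real.sqrt_sq hN0.le
  have hHn : specNorm' H ≤ (N:ℝ) * R^2 := by
    calc specNorm' H ≤ en W * en W' := by rw [hH]; exact specNorm'_vecMulVec_le W W'
      _ ≤ (Real.sqrt (N:ℝ) * R) * (Real.sqrt (N:ℝ) * R) := by
          apply mul_le_mul hWle hW'le (en_nonneg _) (by positivity)
      _ = (N:ℝ) * R^2 := by rw [show (Real.sqrt (N:ℝ) * R) * (Real.sqrt (N:ℝ) * R)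
            = (Real.sqrt (N:ℝ) * Real.sqrt (N:ℝ)) * R^2 by ring, hsqrtNN]
  have hHtn : specNorm' Hᵀ ≤ (N:ℝ) * R^2 := by
    calc specNorm' Hᵀ ≤ en W' * en W := by rw [hHt]; exact specNorm'_vecMulVec_le W' W
      _ ≤ (Real.sqrt (N:ℝ) * R) * (Real.sqrt (N:ℝ) * R) := by
          apply mul_le_mul hW'le hWle (en_nonneg _) (by positivity)
      _ = (N:ℝ) * R^2 := by rw [show (Real.sqrt (N:ℝ) * R) * (Real.sqrt (N:ℝ) * R)
            = (Real.sqrt (N:ℝ) * Real.sqrt (N:ℝ)) * R^2 by ring, hsqrtNN]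

  -- eigen data
  obtain ⟨hu1, μ, hμeig, htop⟩ := hu
  have hdotuu : dotR u u = 1 := by
    rw [dotR, ← hu1, normSq]
    exact Finset.sum_congr rfl fun i _ => (sq (u i)).symm
  set c : ℝ := dotR u w with hcdef
  set v : Fin (L N) → ℝ := u - c • w with hvdef
  have hucv : u = c • w + v := by
    funext i
    rw [hvdef]
    simp
  have hvw : dotR v w = 0 := by
    rw [hvdef, dotR_sub_left, dotR_smul_left, hww, mul_one, ← hcdef, sub_self]
  have henv2 : en v ^ 2 = 1 - c ^ 2 := by
    rw [← dotR_self, hvdef]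
    simp only [dotR_sub_left, dotR_sub_right, dotR_smul_left, dotR_smul_right, hww, hdotuu]
    rw [dotR_comm w u, ← hcdef]
    ring
  have h1mc2 : (0:ℝ) ≤ 1 - c ^ 2 := by rw [← henv2]; exact sq_nonneg _
  have henv1 : en v ≤ 1 := by
    calc en v = Real.sqrt (en v ^ 2) := (Real.sqrt_sq (en_nonneg v)).symm
      _ ≤ Real.sqrt 1 := Real.sqrt_le_sqrt (by rw [henv2]; linarith only [sq_nonneg c])
      _ = 1 := Real.sqrt_one
  have habsc : |c| ≤ 1 := by
    rw [← Real.sqrt_sq_eq_abs]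
    calc Real.sqrt (c ^ 2) ≤ Real.sqrt 1 := Real.sqrt_le_sqrt (by linarith only [h1mc2])
      _ = 1 := Real.sqrt_one
  -- matrix decomposition
  set B : Matrix (Fin (L N)) (Fin (L N)) ℝ :=
    δ • (H * Eᵀ) + (δ • (E * Hᵀ) + δ ^ 2 • (E * Eᵀ)) with hBdef
  have hAB : (H + δ • E) * (H + δ • E)ᵀ = H * Hᵀ + B := by
    rw [hBdef]
    rw [Matrix.transpose_add, Matrix.transpose_smul, Matrix.add_mul, Matrix.mul_add,
      Matrix.mul_add, Matrix.smul_mul, Matrix.smul_mul, Matrix.mul_smul, Matrix.mul_smul,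
      smul_smul, ← sq]
    abel
  have hherm : ((H + δ • E) * (H + δ • E)ᵀ).IsHermitian := by
    have h := Matrix.isHermitian_mul_conjTranspose_self (H + δ • E)
    rwa [Matrix.conjTranspose_eq_transpose_of_trivial] at h
  set lam : ℝ := q * s ^ 2 with hlamdef
  have hHHx : ∀ x : Fin (L N) → ℝ, (H * Hᵀ).mulVec x = (dotR W x * q) • W := by
    intro x
    rw [← Matrix.mulVec_mulVec, hHt, vecMulVec_mulVec', Matrix.mulVec_smul, hH,
      vecMulVec_mulVec', smul_smul]
  have hdWw : dotR W w = s := by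
    rw [hWsw, dotR_smul_left, hww, mul_one]
  have h5 : (H * Hᵀ).mulVec u = (lam * c) • w := by
    rw [hHHx u]
    nth_rewrite 2 [hWsw]
    rw [hWsw, dotR_smul_left, dotR_comm w u, ← hcdef, smul_smul, hlamdef]
    congr 1
    ring
  have h5w : (H * Hᵀ).mulVec w = lam • w := by
    rw [hHHx w, hdWw, hWsw, smul_smul, hlamdef]
    congr 1
    ring
  set bu : Fin (L N) → ℝ := B.mulVec u with hbudef
  have hstar : (lam * c) • w + bu = μ • u := by
    rw [← h5, hbudef, ← Matrix.add_mulVec, ← hAB, hμeig]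
  have hstarw : lam * c + dotR bu w = μ * c := by
    have e1 : dotR ((lam * c) • w + bu) w = lam * c + dotR bu w := by
      rw [dotR_add_left, dotR_smul_left, hww, mul_one]
    have e2 : dotR (μ • u) w = μ * c := by rw [dotR_smul_left, ← hcdef]
    rw [← e1, ← e2, hstar]
  have hveq : μ • v = bu - dotR bu w • w := by
    funext i
    have h1i : μ * u i = lam * c * w i + bu i := by
      have h := congrFun hstar i
      simpa [Pi.add_apply, Pi.smul_apply, smul_eq_mul] using h.symm
    have hvi : v i = u i - c * w i := by rw [hvdef]; simp
    show μ * v i = bu i - dotR bu w * w i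
    rw [hvi]
    have h2 : μ * c = lam * c + dotR bu w := hstarw.symm
    calc μ * (u i - c * w i) = μ * u i - (μ * c) * w i := by ring
      _ = (lam * c * w i + bu i) - (lam * c + dotR bu w) * w i := by rw [h1i, h2]
      _ = bu i - dotR bu w * w i := by ring
  -- projection facts
  have hproj : ∀ x : Fin (L N) → ℝ, en (x - dotR x w • w) ≤ en x := by
    intro x
    have hexp : en (x - dotR x w • w) ^ 2 = en x ^ 2 - dotR x w ^ 2 := by
      rw [← dotR_self]
      simp only [dotR_sub_left, dotR_sub_right, dotR_smul_left, dotR_smul_right, hww]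
      rw [dotR_comm w x, dotR_self]
      ring
    calc en (x - dotR x w • w) = Real.sqrt (en (x - dotR x w • w) ^ 2) :=
          (Real.sqrt_sq (en_nonneg _)).symm
      _ ≤ Real.sqrt (en x ^ 2) := Real.sqrt_le_sqrt (by rw [hexp]; exact sub_le_self _ (sq_nonneg _))
      _ = en x := Real.sqrt_sq (en_nonneg _)
  have hPadd : ∀ x y : Fin (L N) → ℝ, (x + y) - dotR (x + y) w • w
      = (x - dotR x w • w) + (y - dotR y w • w) := by
    intro x y
    rw [dotR_add_left]
    funext i
    simp
    ring
  have hPsmul : ∀ (t : ℝ) (x : Fin (L N) → ℝ), (t • x) - dotR (t • x) w • w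
      = t • (x - dotR x w • w) := by
    intro t x
    rw [dotR_smul_left]
    funext i
    simp
    ring
  have hPw : ∀ t : ℝ, (t • w) - dotR (t • w) w • w = 0 := by
    intro t
    rw [dotR_smul_left, hww, mul_one, sub_self]
  -- B action on w
  have hBw : B.mulVec w = δ • ((H * Eᵀ).mulVec w)
      + (δ • ((E * Hᵀ).mulVec w) + δ ^ 2 • ((E * Eᵀ).mulVec w)) := by
    rw [hBdef, Matrix.add_mulVec, Matrix.add_mulVec, Matrix.smul_mulVec,
      Matrix.smul_mulVec, Matrix.smul_mulVec]
  have ht1 : (H * Eᵀ).mulVec w = (dotR W' (Eᵀ.mulVec w) * s) • w := by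
    rw [← Matrix.mulVec_mulVec, hH, vecMulVec_mulVec']
    nth_rewrite 1 [hWsw]
    rw [smul_smul]
  have ht2 : (E * Hᵀ).mulVec w = s • (E.mulVec W') := by
    rw [← Matrix.mulVec_mulVec, hHt, vecMulVec_mulVec', hdWw, Matrix.mulVec_smul]
  have ht3 : (E * Eᵀ).mulVec w = s⁻¹ • (E.mulVec (Eᵀ.mulVec W)) := by
    rw [← Matrix.mulVec_mulVec, hwdef, Matrix.mulVec_smul, Matrix.mulVec_smul]
  have hsqrtNpos : 0 < Real.sqrt (N:ℝ) := Real.sqrt_pos.2 hN0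
  have hent2 : en ((E * Hᵀ).mulVec w) ≤ (C₀ * R) * (N:ℝ) := by
    rw [ht2, en_smul, abs_of_nonneg hspos.le]
    calc s * en (E.mulVec W') ≤ (Real.sqrt (N:ℝ) * R) * (Real.sqrt (N:ℝ) * C₀) := by
          apply mul_le_mul hsles hEW' (en_nonneg _) (by positivity)
      _ = (Real.sqrt (N:ℝ) * Real.sqrt (N:ℝ)) * (R * C₀) := by ring
      _ = (C₀ * R) * (N:ℝ) := by rw [hsqrtNN]; ring
  have hent3 : en ((E * Eᵀ).mulVec w) ≤ (C₀ / Real.sqrt β) * (N:ℝ) := by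
    rw [ht3, en_smul, abs_of_nonneg (inv_nonneg.2 hspos.le)]
    have hbN : 0 < Real.sqrt (β * (N:ℝ)) := Real.sqrt_pos.2 (by positivity)
    have hsinv : s⁻¹ ≤ (Real.sqrt (β * (N:ℝ)))⁻¹ := by
      apply inv_anti₀ hbN hsgeL
    have hEEW : en (E.mulVec (Eᵀ.mulVec W)) ≤ (N:ℝ) * (Real.sqrt (N:ℝ) * C₀) := by
      calc en (E.mulVec (Eᵀ.mulVec W)) ≤ specNorm' E * en (Eᵀ.mulVec W) := en_mulVec_le _ _
        _ ≤ (N:ℝ) * (Real.sqrt (N:ℝ) * C₀) := by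
            apply mul_le_mul hEfro hEtW (en_nonneg _) hN0.le
    calc s⁻¹ * en (E.mulVec (Eᵀ.mulVec W))
        ≤ (Real.sqrt (β * (N:ℝ)))⁻¹ * ((N:ℝ) * (Real.sqrt (N:ℝ) * C₀)) := by
          apply mul_le_mul hsinv hEEW (en_nonneg _) (by positivity)
      _ = (C₀ / Real.sqrt β) * (N:ℝ) := by
          rw [Real.sqrt_mul hβpos.le]
          have hsb : 0 < Real.sqrt β := Real.sqrt_pos.2 hβpos
          field_simp
  have hδle1 : |δ| ≤ 1 := le_trans hδ (min_le_left _ _)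
  have hδsq : δ ^ 2 ≤ |δ| := by
    calc δ ^ 2 = |δ| * |δ| := by rw [← abs_mul, ← sq, abs_of_nonneg (sq_nonneg δ)]
      _ ≤ |δ| * 1 := mul_le_mul_of_nonneg_left hδle1 (abs_nonneg δ)
      _ = |δ| := mul_one _
  have hPBw : en (B.mulVec w - dotR (B.mulVec w) w • w) ≤ |δ| * (C₃ * (N:ℝ)) := by
    rw [hBw, hPadd, hPadd, hPsmul, hPsmul, hPsmul, ht1, hPw, smul_zero, zero_add]
    have c1 : en (δ • ((E * Hᵀ).mulVec w - dotR ((E * Hᵀ).mulVec w) w • w))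
        ≤ |δ| * ((C₀ * R) * (N:ℝ)) := by
      rw [en_smul]
      exact mul_le_mul_of_nonneg_left (le_trans (hproj _) hent2) (abs_nonneg _)
    have c2 : en (δ ^ 2 • ((E * Eᵀ).mulVec w - dotR ((E * Eᵀ).mulVec w) w • w))
        ≤ |δ| * ((C₀ / Real.sqrt β) * (N:ℝ)) := by
      rw [en_smul, abs_of_nonneg (sq_nonneg δ)]
      exact mul_le_mul hδsq (le_trans (hproj _) hent3) (en_nonneg _) (abs_nonneg _)
    calc en (δ • ((E * Hᵀ).mulVec w - dotR ((E * Hᵀ).mulVec w) w • w)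
          + δ ^ 2 • ((E * Eᵀ).mulVec w - dotR ((E * Eᵀ).mulVec w) w • w))
        ≤ en (δ • ((E * Hᵀ).mulVec w - dotR ((E * Hᵀ).mulVec w) w • w))
          + en (δ ^ 2 • ((E * Eᵀ).mulVec w - dotR ((E * Eᵀ).mulVec w) w • w)) := en_add_le _ _
      _ ≤ |δ| * ((C₀ * R) * (N:ℝ)) + |δ| * ((C₀ / Real.sqrt β) * (N:ℝ)) := add_le_add c1 c2
      _ = |δ| * (C₃ * (N:ℝ)) := by rw [hC₃def]; ring
  set nB : ℝ := specNorm' B with hnBdef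
  have hnBnn : 0 ≤ nB := specNorm'_nonneg B
  have hnB : nB ≤ |δ| * (C₂ * (N:ℝ) ^ 2) := by
    have b1 : specNorm' (δ • (H * Eᵀ)) ≤ |δ| * (R ^ 2 * (N:ℝ) ^ 2) := by
      calc specNorm' (δ • (H * Eᵀ)) ≤ |δ| * specNorm' (H * Eᵀ) := specNorm'_smul_le _ _
        _ ≤ |δ| * (specNorm' H * specNorm' Eᵀ) :=
            mul_le_mul_of_nonneg_left (specNorm'_mul_le _ _) (abs_nonneg _)
        _ ≤ |δ| * (((N:ℝ) * R ^ 2) * (N:ℝ)) := mul_le_mul_of_nonneg_left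
            (mul_le_mul hHn hEtfro (specNorm'_nonneg _) (by positivity)) (abs_nonneg _)
        _ = |δ| * (R ^ 2 * (N:ℝ) ^ 2) := by ring
    have b2 : specNorm' (δ • (E * Hᵀ)) ≤ |δ| * (R ^ 2 * (N:ℝ) ^ 2) := by
      calc specNorm' (δ • (E * Hᵀ)) ≤ |δ| * specNorm' (E * Hᵀ) := specNorm'_smul_le _ _
        _ ≤ |δ| * (specNorm' E * specNorm' Hᵀ) :=
            mul_le_mul_of_nonneg_left (specNorm'_mul_le _ _) (abs_nonneg _)
        _ ≤ |δ| * ((N:ℝ) * ((N:ℝ) * R ^ 2)) := mul_le_mul_of_nonneg_left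
            (mul_le_mul hEfro hHtn (specNorm'_nonneg _) hN0.le) (abs_nonneg _)
        _ = |δ| * (R ^ 2 * (N:ℝ) ^ 2) := by ring
    have b3 : specNorm' (δ ^ 2 • (E * Eᵀ)) ≤ |δ| * (N:ℝ) ^ 2 := by
      calc specNorm' (δ ^ 2 • (E * Eᵀ)) ≤ |δ ^ 2| * specNorm' (E * Eᵀ) := specNorm'_smul_le _ _
        _ = δ ^ 2 * specNorm' (E * Eᵀ) := by rw [abs_of_nonneg (sq_nonneg δ)]
        _ ≤ |δ| * ((N:ℝ) * (N:ℝ)) := mul_le_mul hδsq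
            (le_trans (specNorm'_mul_le _ _)
              (mul_le_mul hEfro hEtfro (specNorm'_nonneg _) hN0.le))
            (specNorm'_nonneg _) (abs_nonneg _)
        _ = |δ| * (N:ℝ) ^ 2 := by ring
    calc nB = specNorm' (δ • (H * Eᵀ) + (δ • (E * Hᵀ) + δ ^ 2 • (E * Eᵀ))) := by
          rw [hnBdef, hBdef]
      _ ≤ specNorm' (δ • (H * Eᵀ)) + (specNorm' (δ • (E * Hᵀ))
          + specNorm' (δ ^ 2 • (E * Eᵀ))) :=
          le_trans (specNorm'_add_le _ _) (add_le_add le_rfl (specNorm'_add_le _ _))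
      _ ≤ |δ| * (R ^ 2 * (N:ℝ) ^ 2) + (|δ| * (R ^ 2 * (N:ℝ) ^ 2) + |δ| * (N:ℝ) ^ 2) :=
          add_le_add b1 (add_le_add b2 b3)
      _ = |δ| * ((2 * R ^ 2 + 1) * (N:ℝ) ^ 2) := by ring
      _ = |δ| * (C₂ * (N:ℝ) ^ 2) := by rw [hC₂def]
  -- Rayleigh lower bound for μ
  have hray : lam - nB ≤ μ := by
    have h7 := rayleigh_le_top _ hherm μ htop w
    have h8 : ((H + δ • E) * (H + δ • E)ᵀ).mulVec w = lam • w + B.mulVec w := by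
      rw [hAB, Matrix.add_mulVec, h5w]
    rw [h8, hww, mul_one, dotR_add_left, dotR_smul_left, hww, mul_one] at h7
    have h9 : |dotR (B.mulVec w) w| ≤ nB := by
      calc |dotR (B.mulVec w) w| ≤ en (B.mulVec w) * en w := abs_dotR_le _ _
        _ = en (B.mulVec w) := by rw [henw, mul_one]
        _ ≤ nB * en w := en_mulVec_le _ _
        _ = nB := by rw [henw, mul_one]
    have h10 : -nB ≤ dotR (B.mulVec w) w := (abs_le.1 h9).1
    linarith only [h7, h10]
  -- quantitative bounds
  have hlamge : β * γ * (N:ℝ) ^ 2 ≤ lam := by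
    rw [hlamdef]
    have h1 : γ * (N:ℝ) ≤ q := le_trans hKge hqK
    have h2 : β * (N:ℝ) ≤ s ^ 2 := le_trans hLge hsL
    calc β * γ * (N:ℝ) ^ 2 = (γ * (N:ℝ)) * (β * (N:ℝ)) := by ring
      _ ≤ q * s ^ 2 := mul_le_mul h1 h2 (by positivity) hqpos.le
  have hδ₀le : |δ| ≤ β * γ / (4 * C₂) := le_trans hδ (min_le_right _ _)
  have hnB4 : nB ≤ (β * γ / 4) * (N:ℝ) ^ 2 := by
    calc nB ≤ |δ| * (C₂ * (N:ℝ) ^ 2) := hnB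
      _ ≤ (β * γ / (4 * C₂)) * (C₂ * (N:ℝ) ^ 2) :=
          mul_le_mul_of_nonneg_right hδ₀le (by positivity)
      _ = (β * γ / 4) * (N:ℝ) ^ 2 := by field_simp
  have hμ0 : 0 ≤ μ := by
    have hX : (0:ℝ) ≤ β * γ * (N:ℝ) ^ 2 := by positivity
    linarith only [hray, hlamge, hnB4, hX]
  -- the core inequality
  have hμv : μ * en v ≤ |δ| * (C₃ * (N:ℝ)) + nB * en v := by
    have e3 : en (μ • v) = μ * en v := by rw [en_smul, abs_of_nonneg hμ0]
    rw [← e3, hveq]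
    have hbu2 : bu = c • (B.mulVec w) + B.mulVec v := by
      rw [hbudef]
      nth_rewrite 1 [hucv]
      rw [Matrix.mulVec_add, Matrix.mulVec_smul]
    rw [hbu2, hPadd, hPsmul]
    calc en (c • (B.mulVec w - dotR (B.mulVec w) w • w)
          + (B.mulVec v - dotR (B.mulVec v) w • w))
        ≤ en (c • (B.mulVec w - dotR (B.mulVec w) w • w))
          + en (B.mulVec v - dotR (B.mulVec v) w • w) := en_add_le _ _
      _ ≤ |c| * (|δ| * (C₃ * (N:ℝ))) + nB * en v := by
          apply add_le_add
          · rw [en_smul]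
            exact mul_le_mul_of_nonneg_left hPBw (abs_nonneg c)
          · calc en (B.mulVec v - dotR (B.mulVec v) w • w) ≤ en (B.mulVec v) := hproj _
              _ ≤ nB * en v := en_mulVec_le _ _
      _ ≤ 1 * (|δ| * (C₃ * (N:ℝ))) + nB * en v := by
          refine add_le_add ?_ le_rfl
          apply mul_le_mul_of_nonneg_right habsc (by positivity)
      _ = |δ| * (C₃ * (N:ℝ)) + nB * en v := by rw [one_mul]
  have hkey : (lam - 2 * nB) * en v ≤ |δ| * (C₃ * (N:ℝ)) := by
    have h8 : (lam - nB) * en v ≤ μ * en v := mul_le_mul_of_nonneg_right hray (en_nonneg v)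
    nlinarith only [h8, hμv]
  have henvC : en v ≤ C₄ / (N:ℝ) := by
    have hgap : (β * γ / 2) * (N:ℝ) ^ 2 ≤ lam - 2 * nB := by linarith only [hlamge, hnB4]
    have h9 : (β * γ / 2) * (N:ℝ) ^ 2 * en v ≤ C₃ * (N:ℝ) := by
      calc (β * γ / 2) * (N:ℝ) ^ 2 * en v ≤ (lam - 2 * nB) * en v :=
            mul_le_mul_of_nonneg_right hgap (en_nonneg v)
        _ ≤ |δ| * (C₃ * (N:ℝ)) := hkey
        _ ≤ 1 * (C₃ * (N:ℝ)) := mul_le_mul_of_nonneg_right hδle1 (by positivity)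
        _ = C₃ * (N:ℝ) := one_mul _
    have h10 : en v ≤ (C₃ * (N:ℝ)) / ((β * γ / 2) * (N:ℝ) ^ 2) := by
      rw [le_div_iff₀ (by positivity)]
      calc en v * ((β * γ / 2) * (N:ℝ) ^ 2) = (β * γ / 2) * (N:ℝ) ^ 2 * en v := by ring
        _ ≤ C₃ * (N:ℝ) := h9
    calc en v ≤ (C₃ * (N:ℝ)) / ((β * γ / 2) * (N:ℝ) ^ 2) := h10
      _ = C₄ / (N:ℝ) := by
          rw [hC₄def]
          field_simp
  -- final assembly
  have hnormSqW : normSq W = s ^ 2 := by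
    rw [normSq]
    exact (en_sq W).symm
  have hD : Matrix.vecMulVec u u - (normSq W)⁻¹ • Matrix.vecMulVec W W
      = (c ^ 2 - 1) • Matrix.vecMulVec w w + (c • Matrix.vecMulVec w v
        + (c • Matrix.vecMulVec v w + Matrix.vecMulVec v v)) := by
    rw [hnormSqW]
    ext i j
    have hui : u i = c * w i + v i := by rw [congrFun hucv i]; simp
    have huj : u j = c * w j + v j := by rw [congrFun hucv j]; simp
    have hWi : W i = s * w i := by rw [congrFun hWsw i]; simp
    have hWj : W j = s * w j := by rw [congrFun hWsw j]; simp
    simp only [Matrix.sub_apply, Matrix.add_apply, Matrix.smul_apply, Matrix.vecMulVec_apply,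
      smul_eq_mul]
    rw [hui, huj, hWi, hWj]
    field_simp
    ring
  have hfinal : specNorm' (Matrix.vecMulVec u u - (normSq W)⁻¹ • Matrix.vecMulVec W W)
      ≤ 4 * (C₄ / (N:ℝ)) := by
    rw [hD]
    have habs1 : |c ^ 2 - 1| = en v ^ 2 := by
      rw [abs_sub_comm, abs_of_nonneg h1mc2, henv2]
    calc specNorm' ((c ^ 2 - 1) • Matrix.vecMulVec w w + (c • Matrix.vecMulVec w v
          + (c • Matrix.vecMulVec v w + Matrix.vecMulVec v v)))
        ≤ specNorm' ((c ^ 2 - 1) • Matrix.vecMulVec w w) + (specNorm' (c • Matrix.vecMulVec w v)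
          + (specNorm' (c • Matrix.vecMulVec v w) + specNorm' (Matrix.vecMulVec v v))) := by
          refine le_trans (specNorm'_add_le _ _) (add_le_add le_rfl ?_)
          refine le_trans (specNorm'_add_le _ _) (add_le_add le_rfl ?_)
          exact specNorm'_add_le _ _
      _ ≤ |c ^ 2 - 1| * (en w * en w) + (|c| * (en w * en v)
          + (|c| * (en v * en w) + en v * en v)) := by
          apply add_le_add
          · exact le_trans (specNorm'_smul_le _ _)
              (mul_le_mul_of_nonneg_left (specNorm'_vecMulVec_le _ _) (abs_nonneg _))
          apply add_le_add
          · exact le_trans (specNorm'_smul_le _ _)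
              (mul_le_mul_of_nonneg_left (specNorm'_vecMulVec_le _ _) (abs_nonneg _))
          apply add_le_add
          · exact le_trans (specNorm'_smul_le _ _)
              (mul_le_mul_of_nonneg_left (specNorm'_vecMulVec_le _ _) (abs_nonneg _))
          · exact specNorm'_vecMulVec_le _ _
      _ = en v ^ 2 + (|c| * en v + (|c| * en v + en v ^ 2)) := by
          rw [habs1, henw]
          ring
      _ ≤ en v + (en v + (en v + en v)) := by
          have h11 : en v ^ 2 ≤ en v := by
            calc en v ^ 2 = en v * en v := sq (en v)
              _ ≤ 1 * en v := mul_le_mul_of_nonneg_right henv1 (en_nonneg v)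
              _ = en v := one_mul _
          have h12 : |c| * en v ≤ en v := by
            calc |c| * en v ≤ 1 * en v := mul_le_mul_of_nonneg_right habsc (en_nonneg v)
              _ = en v := one_mul _
          linarith only [h11, h12]
      _ = 4 * en v := by ring
      _ ≤ 4 * (C₄ / (N:ℝ)) := by linarith only [henvC]
  calc specNorm (Matrix.vecMulVec u u - (normSq W)⁻¹ • Matrix.vecMulVec W W)
      = specNorm' (Matrix.vecMulVec u u - (normSq W)⁻¹ • Matrix.vecMulVec W W) := rfl
    _ ≤ 4 * (C₄ / (N:ℝ)) := hfinal
    _ ≤ (4 * C₄ + 1) / (N:ℝ) := by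
        rw [show 4 * (C₄ / (N:ℝ)) = (4 * C₄) / (N:ℝ) by ring, div_le_div_iff₀ hN0 hN0]
        nlinarith only [hN0, hC₄pos]
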